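/- Let a = 2(n-1), n ≥ 2, b ∈ (0,1), ε > 0, and define H(ρ) = (1 + (1+ε)(1+b) a ρ^{-2}) / (1 + a ρ^{-2})^{1+b} for ρ > 0. Then H(ρ) → 1 as ρ → ∞, and H is strictly decreasing on the interval ρ > √(a b (1+ε)/ε); in particular H(ρ) > 1 for all ρ > √(a b (1+ε)/ε). -/

import Mathlib

open Real Filter

lemma auxF_mono (b ε : ℝ) (hb : 0 < b) (hε : 0 < ε) :
    StrictMonoOn (fun s : ℝ => Real.log (1 + (1+ε)*(1+b)*s) - (1+b) * Real.log (1+s))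
      (Set.Icc 0 (ε/(b*(1+ε)))) := by
  set c : ℝ := (1+ε)*(1+b) with hc
  have hc0 : 0 < c := mul_pos (by linarith) (by linarith)
  set s₀ : ℝ := ε/(b*(1+ε)) with hs₀
  have hs₀0 : 0 < s₀ := div_pos hε (by positivity)
  have hpos1 : ∀ x ∈ Set.Icc (0:ℝ) s₀, 0 < 1 + c*x := fun x hx => by nlinarith [hx.1]
  have hpos2 : ∀ x ∈ Set.Icc (0:ℝ) s₀, 0 < 1 + x := fun x hx => by nlinarith [hx.1]
  have hderiv : ∀ x ∈ Set.Ioo (0:ℝ) s₀,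
      HasDerivAt (fun s : ℝ => Real.log (1 + c*s) - (1+b) * Real.log (1+s))
        (c/(1+c*x) - (1+b)*(1/(1+x))) x := by
    intro x hx
    have hx' : x ∈ Set.Icc (0:ℝ) s₀ := ⟨hx.1.le, hx.2.le⟩
    have h1 : HasDerivAt (fun s : ℝ => 1 + c*s) c x := by
      simpa using ((hasDerivAt_id x).const_mul c).const_add (1:ℝ)
    have h2 : HasDerivAt (fun s : ℝ => 1 + s) 1 x := by
      simpa using (hasDerivAt_id x).const_add (1:ℝ)
    have hl1 := h1.log (ne_of_gt (hpos1 x hx'))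
    have hl2 := (h2.log (ne_of_gt (hpos2 x hx'))).const_mul (1+b)
    exact hl1.sub hl2
  apply strictMonoOn_of_deriv_pos (convex_Icc _ _)
  · apply ContinuousOn.sub
    · apply ContinuousOn.log (by fun_prop)
      exact fun x hx => ne_of_gt (hpos1 x hx)
    · exact ContinuousOn.mul continuousOn_const
        (ContinuousOn.log (by fun_prop) (fun x hx => ne_of_gt (hpos2 x hx)))
  · intro x hx
    rw [interior_Icc] at hx
    rw [(hderiv x hx).deriv]
    have hx1 : 0 < 1 + c*x := hpos1 x ⟨hx.1.le, hx.2.le⟩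
    have hx2 : 0 < 1 + x := hpos2 x ⟨hx.1.le, hx.2.le⟩
    have hbd : x * (b*(1+ε)) < ε := by
      have := hx.2
      rw [hs₀, lt_div_iff₀ (by positivity)] at this
      exact this
    rw [sub_pos, mul_one_div, div_lt_div_iff₀ hx2 hx1]
    nlinarith [hx.1, hb, hε]

lemma auxG_mono (b ε : ℝ) (hb : 0 < b) (hε : 0 < ε) :
    StrictMonoOn (fun s : ℝ => (1 + (1+ε)*(1+b)*s) / (1+s) ^ ((1:ℝ)+b))
      (Set.Icc 0 (ε/(b*(1+ε)))) := by
  have hF := auxF_mono b ε hb hε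
  intro x hx y hy hxy
  have hk : ∀ z ∈ Set.Icc (0:ℝ) (ε/(b*(1+ε))),
      (1 + (1+ε)*(1+b)*z) / (1+z) ^ ((1:ℝ)+b)
        = Real.exp (Real.log (1 + (1+ε)*(1+b)*z) - (1+b) * Real.log (1+z)) := by
    intro z hz
    have h1 : 0 < 1 + (1+ε)*(1+b)*z := by nlinarith [hz.1, mul_pos (by linarith : (0:ℝ) < 1+ε) (by linarith : (0:ℝ) < 1+b)]
    have h2 : 0 < 1 + z := by linarith [hz.1]
    rw [Real.exp_sub, Real.exp_log h1, Real.rpow_def_of_pos h2]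
    ring_nf
  dsimp only
  rw [hk x hx, hk y hy]
  exact Real.exp_lt_exp.mpr (hF hx hy hxy)

theorem stmt5 (n : ℕ) (hn : 2 ≤ n) (a b ε : ℝ) (ha : a = 2 * ((n : ℝ) - 1))
    (hb : 0 < b) (hb1 : b < 1) (hε : 0 < ε)
    (H : ℝ → ℝ)
    (hH : ∀ ρ : ℝ, 0 < ρ →
      H ρ = (1 + (1+ε)*(1+b)*a * ρ ^ (-2 : ℝ)) / (1 + a * ρ ^ (-2 : ℝ)) ^ (1 + b)) :
    Filter.Tendsto H Filter.atTop (nhds 1)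
    ∧ StrictAntiOn H (Set.Ioi (Real.sqrt (a*b*(1+ε)/ε)))
    ∧ ∀ ρ : ℝ, Real.sqrt (a*b*(1+ε)/ε) < ρ → 1 < H ρ := by
  have hn2 : (2:ℝ) ≤ (n:ℝ) := by exact_mod_cast hn
  have ha0 : 0 < a := by rw [ha]; linarith
  set s₀ : ℝ := ε/(b*(1+ε)) with hs₀def
  have hs₀0 : 0 < s₀ := div_pos hε (by positivity)
  set ρ₀ : ℝ := Real.sqrt (a*b*(1+ε)/ε) with hρ₀def
  have hρ₀0 : 0 < ρ₀ := Real.sqrt_pos.mpr (by positivity)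
  have hρ₀sq : ρ₀^2 = a*b*(1+ε)/ε := Real.sq_sqrt (by positivity)
  have hG := auxG_mono b ε hb hε
  set G : ℝ → ℝ := fun s => (1 + (1+ε)*(1+b)*s) / (1+s) ^ ((1:ℝ)+b) with hGdef
  have hrpow : ∀ ρ : ℝ, 0 < ρ → ρ ^ (-2:ℝ) = (ρ^2)⁻¹ := by
    intro ρ hρ
    rw [show (-2:ℝ) = -((2:ℕ):ℝ) by norm_num, Real.rpow_neg hρ.le, Real.rpow_natCast]
  have hHG : ∀ ρ : ℝ, 0 < ρ → H ρ = G (a * ρ ^ (-2:ℝ)) := by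
    intro ρ hρ
    rw [hH ρ hρ, hGdef]
    ring_nf
  have hmem : ∀ ρ : ℝ, ρ₀ < ρ → a * ρ ^ (-2:ℝ) ∈ Set.Icc (0:ℝ) s₀ := by
    intro ρ hρ
    have hρpos : 0 < ρ := hρ₀0.trans hρ
    have h2 : (0:ℝ) < ρ^2 := by positivity
    rw [hrpow ρ hρpos]
    constructor
    · positivity
    · have hsq : ρ₀^2 < ρ^2 := by nlinarith
      rw [hρ₀sq] at hsq
      have key : a*b*(1+ε) < ε*ρ^2 := by
        rw [div_lt_iff₀ hε] at hsq; linarith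
      rw [← div_eq_mul_inv, hs₀def, div_le_div_iff₀ h2 (by positivity)]
      nlinarith
  -- Tendsto
  have htend_s : Filter.Tendsto (fun ρ : ℝ => a * ρ ^ (-2:ℝ)) Filter.atTop (nhds 0) := by
    have h := tendsto_rpow_neg_atTop (show (0:ℝ) < 2 by norm_num)
    have h2 := h.const_mul a
    simpa using h2
  have hGcont : ContinuousAt G 0 := by
    apply ContinuousAt.div
    · fun_prop
    · exact (continuousAt_const.add continuousAt_id).rpow_const (Or.inl (by norm_num))
    · norm_num
  have hG0 : G 0 = 1 := by simp [hGdef]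
  have hTend : Filter.Tendsto H Filter.atTop (nhds 1) := by
    have h1 : Filter.Tendsto (fun ρ : ℝ => G (a * ρ ^ (-2:ℝ))) Filter.atTop (nhds 1) := by
      have := hGcont.tendsto.comp htend_s
      rwa [hG0] at this
    apply h1.congr'
    filter_upwards [Filter.eventually_gt_atTop 0] with ρ hρ
    exact (hHG ρ hρ).symm
  have hanti : StrictAntiOn H (Set.Ioi ρ₀) := by
    intro x hx y hy hxy
    simp only [Set.mem_Ioi] at hx hy
    have hx0 : 0 < x := hρ₀0.trans hx
    have hy0 : 0 < y := hρ₀0.trans hy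
    rw [hHG x hx0, hHG y hy0]
    apply hG (hmem y hy) (hmem x hx)
    rw [hrpow x hx0, hrpow y hy0]
    have hsq : x^2 < y^2 := by nlinarith
    have hinv : (y^2)⁻¹ < (x^2)⁻¹ := by
      apply inv_strictAnti₀ (by positivity) hsq
    exact mul_lt_mul_of_pos_left hinv ha0
  refine ⟨hTend, hanti, ?_⟩
  intro ρ hρ
  have hρ1 : ρ₀ < ρ + 1 := by linarith
  have h1 : 1 ≤ H (ρ+1) := by
    apply le_of_tendsto hTend
    filter_upwards [Filter.eventually_gt_atTop (ρ+1)] with x hxgt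
    exact (hanti (Set.mem_Ioi.mpr hρ1) (Set.mem_Ioi.mpr (by linarith)) hxgt).le
  have h2 : H (ρ+1) < H ρ :=
    hanti (Set.mem_Ioi.mpr hρ) (Set.mem_Ioi.mpr hρ1) (lt_add_one ρ)
  linarith
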